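/- Let i ∈ V with p_i(0) ∈ (0,1). If the opinion sequence (p_i(k))_{k≥0} converges to a limit p* ∈ (0,1), then the integer sequence (n_i^+(k))_{k≥0} is eventually constant and p* = (lim_{k→∞} n_i^+(k))/n_i. -/

import Mathlib

/-- CODA model (converse direction): if `p_i(k)` converges to a limit `p* ∈ (0,1)`,
then `n_i^+(k)` is eventually constant and `p* = (lim n_i^+(k)) / n_i`. -/
theorem stmt_6
    (n : ℕ) (N : Fin n → Finset (Fin n))
    (hdeg : ∀ i, 1 ≤ (N i).card)
    (p : Fin n → ℕ → ℝ) (q : Fin n → ℕ → ℕ)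
    (hq0 : ∀ i k, (p i k < 1 / 2 ∨ (p i k = 1 / 2 ∧ p i (k - 1) < 1 / 2)) → q i k = 0)
    (hq1 : ∀ i k, ¬(p i k < 1 / 2 ∨ (p i k = 1 / 2 ∧ p i (k - 1) < 1 / 2)) → q i k = 1)
    (hupd : ∀ i k, p i (k + 1) =
      p i k + p i k * (1 - p i k) / (N i).card * ∑ j ∈ N i, ((q j k : ℝ) - p i k))
    (i : Fin n) (hp0 : p i 0 ∈ Set.Ioo (0 : ℝ) 1)
    (pstar : ℝ) (hpstar : pstar ∈ Set.Ioo (0 : ℝ) 1)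
    (hconv : Filter.Tendsto (fun k => p i k) Filter.atTop (nhds pstar)) :
    ∃ c K : ℕ, (∀ k ≥ K, ((N i).filter fun j => q j k = 1).card = c) ∧
      pstar = (c : ℝ) / (N i).card := by
  set m : ℕ := (N i).card with hmdef
  have hm0 : (0:ℝ) < (m:ℝ) := by exact_mod_cast hdeg i
  set c : ℕ → ℕ := fun k => ((N i).filter fun j => q j k = 1).card with hcdef
  have hsum : ∀ k, ∑ j ∈ N i, (q j k : ℝ) = (c k : ℝ) := by
    intro k
    have hcongr : ∀ j ∈ N i, (q j k : ℝ) = if q j k = 1 then (1:ℝ) else 0 := by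
      intro j _
      by_cases h : p j k < 1/2 ∨ (p j k = 1/2 ∧ p j (k-1) < 1/2)
      · simp [hq0 j k h]
      · simp [hq1 j k h]
    rw [Finset.sum_congr rfl hcongr, Finset.sum_boole]
  have hdiff : ∀ k, p i (k+1) - p i k
      = p i k * (1 - p i k) * ((c k : ℝ)/(m:ℝ) - p i k) := by
    intro k
    rw [hupd i k, Finset.sum_sub_distrib, hsum, Finset.sum_const, nsmul_eq_mul, ← hmdef]
    field_simp
    ring
  have hdiff0 : Filter.Tendsto (fun k => p i (k+1) - p i k) Filter.atTop (nhds 0) := by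
    have h1 : Filter.Tendsto (fun k => p i (k+1)) Filter.atTop (nhds pstar) :=
      hconv.comp (Filter.tendsto_add_atTop_nat 1)
    simpa using h1.sub hconv
  have hden : Filter.Tendsto (fun k => p i k * (1 - p i k)) Filter.atTop
      (nhds (pstar*(1-pstar))) := hconv.mul (tendsto_const_nhds.sub hconv)
  have hden0 : pstar * (1 - pstar) ≠ 0 := by nlinarith [hpstar.1, hpstar.2]
  have hratio : Filter.Tendsto
      (fun k => (p i (k+1) - p i k) / (p i k * (1 - p i k))) Filter.atTop (nhds 0) := by
    have h := hdiff0.div hden hden0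
    rw [zero_div] at h
    exact h
  have hev : ∀ᶠ k in Filter.atTop, p i k ∈ Set.Ioo (0:ℝ) 1 :=
    hconv.eventually (Ioo_mem_nhds hpstar.1 hpstar.2)
  have hr : Filter.Tendsto (fun k => (c k : ℝ)/(m:ℝ)) Filter.atTop (nhds pstar) := by
    have heq : ∀ᶠ k in Filter.atTop,
        (p i (k+1) - p i k) / (p i k*(1-p i k)) + p i k = (c k:ℝ)/(m:ℝ) := by
      filter_upwards [hev] with k hk
      have hdk : p i k * (1 - p i k) ≠ 0 := by nlinarith [hk.1, hk.2]
      rw [hdiff k]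
      rw [mul_div_cancel_left₀ _ hdk]
      ring
    exact Filter.Tendsto.congr' heq (by simpa using hratio.add hconv)
  have hc_tend : Filter.Tendsto (fun k => (c k : ℝ)) Filter.atTop (nhds (pstar * m)) := by
    have := hr.mul_const (m:ℝ)
    refine this.congr fun k => ?_
    field_simp
  obtain ⟨K, hK⟩ := Metric.tendsto_atTop.mp hc_tend (1/2) (by norm_num)
  refine ⟨c K, K, ?_, ?_⟩
  · intro k hk
    have h1 := hK k hk
    have h2 := hK K le_rfl
    rw [Real.dist_eq] at h1 h2
    have habs : |(c k : ℝ) - (c K : ℝ)| < 1 := by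
      calc |(c k:ℝ) - (c K:ℝ)| ≤ |(c k:ℝ) - pstar*m| + |pstar*m - (c K:ℝ)| :=
        abs_sub_le _ _ _
      _ < 1 := by rw [abs_sub_comm (pstar*m)] at *; linarith
    have hz : |((c k : ℤ) - (c K : ℤ))| < 1 := by exact_mod_cast habs
    rw [abs_lt] at hz
    have : (c k : ℤ) = (c K : ℤ) := by omega
    exact_mod_cast this
  · have hevc : ∀ᶠ k in Filter.atTop, (fun _ => (c K : ℝ)) k = (c k : ℝ) := by
      rw [Filter.eventually_atTop]
      refine ⟨K, fun k hk => ?_⟩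
      have h1 := hK k hk
      have h2 := hK K le_rfl
      rw [Real.dist_eq] at h1 h2
      have habs : |(c k : ℝ) - (c K : ℝ)| < 1 := by
        calc |(c k:ℝ) - (c K:ℝ)| ≤ |(c k:ℝ) - pstar*m| + |pstar*m - (c K:ℝ)| :=
          abs_sub_le _ _ _
        _ < 1 := by rw [abs_sub_comm (pstar*m)] at *; linarith
      have hz : |((c k : ℤ) - (c K : ℤ))| < 1 := by exact_mod_cast habs
      rw [abs_lt] at hz
      have : (c k : ℤ) = (c K : ℤ) := by omega
      show ((c K : ℝ)) = (c k : ℝ)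
      exact_mod_cast this.symm
    have := tendsto_nhds_unique (Filter.Tendsto.congr' hevc tendsto_const_nhds) hc_tend
    field_simp
    linarith [this]
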